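/- Let $\Lambda(\cdot) = \sum_\alpha K_\alpha (\cdot) K_\alpha^\dagger$ be a CPTP map with strictly incoherent Kraus operators $K_\alpha = \sum_x c_{\alpha,x} |f_\alpha(x)\rangle\langle x|$ where each $f_\alpha$ is a permutation of $\{1,\dots,d\}$. Let $\Psi_M$ be the maximally coherent projection on the first $M$ basis vectors and $\Pi_{>M} = \frac{1}{M}\sum_{x=M+1}^{d} |x\rangle\langle x|$. Then the operator $A = \Lambda^*(\Psi_M) + \Lambda^*(\Pi_{>M})$ satisfies: (i) $0 \leq A \leq \mathbb{1}$; (ii) $\langle y | A | y \rangle = 1/M$ for all $y$; and (iii) $A$ admits a decomposition $A = \frac{1}{M}\sum_j |\phi_j\rangle\langle\phi_j|$ into vectors $|\phi_j\rangle$ each supported on at most $M$ computational basis elements. -/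

import Mathlib

open Matrix ComplexOrder

/-- Kraus operator `K_α = ∑_x c_{α,x} |f_α(x)⟩⟨x|` of a strictly incoherent operation. -/
noncomputable def sioKraus {d : ℕ} (f : Equiv.Perm (Fin d)) (c : Fin d → ℂ) :
    Matrix (Fin d) (Fin d) ℂ :=
  Matrix.of fun i j => if i = f j then c j else 0

/-- The maximally coherent projector `Ψ_M` on the first `M` basis vectors of `ℂ^d`. -/
noncomputable def PsiM (d M : ℕ) : Matrix (Fin d) (Fin d) ℂ :=
  Matrix.of fun i j => if i.val < M ∧ j.val < M then (1 : ℂ) / M else 0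

/-- `Π_{>M} = (1/M) ∑_{x > M} |x⟩⟨x|`. -/
noncomputable def PiGtM (d M : ℕ) : Matrix (Fin d) (Fin d) ℂ :=
  Matrix.of fun i j => if i = j ∧ M ≤ i.val then (1 : ℂ) / M else 0

-- sandwich entry lemma
lemma sandwich_apply {d : ℕ} (f : Equiv.Perm (Fin d)) (c : Fin d → ℂ)
    (B : Matrix (Fin d) (Fin d) ℂ) (x y : Fin d) :
    ((sioKraus f c)ᴴ * B * sioKraus f c) x y
      = star (c x) * B (f x) (f y) * c y := by
  simp [Matrix.mul_apply, sioKraus, Matrix.conjTranspose_apply, ite_mul, mul_ite,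
    apply_ite (starRingEnd ℂ), Finset.sum_ite_eq, Finset.sum_ite_eq']

-- PSD of vecMulVec u (star u)
lemma psd_vecMulVec {n : Type*} [Fintype n] (u : n → ℂ) :
    (Matrix.vecMulVec u (star u)).PosSemidef := by
  rw [Matrix.posSemidef_iff_dotProduct_mulVec]
  constructor
  · ext i j
    simp [Matrix.vecMulVec_apply, Matrix.conjTranspose_apply, mul_comm]
  · intro x
    have : star x ⬝ᵥ (Matrix.vecMulVec u (star u)) *ᵥ x
        = star (star u ⬝ᵥ x) * (star u ⬝ᵥ x) := by
      simp only [dotProduct, Matrix.mulVec, Matrix.vecMulVec_apply, Finset.mul_sum,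
        Finset.sum_mul, star_sum, Pi.star_apply, star_mul', star_star]
      rw [Finset.sum_comm]
      apply Finset.sum_congr rfl; intro i _
      apply Finset.sum_congr rfl; intro j _
      ring
    rw [this]
    exact star_mul_self_nonneg _

-- sandwich of a rank-one projector
lemma sandwich_vecMulVec {n : Type*} [Fintype n] (K : Matrix n n ℂ) (u : n → ℂ) :
    Kᴴ * Matrix.vecMulVec u (star u) * K
      = Matrix.vecMulVec (Kᴴ *ᵥ u) (star (Kᴴ *ᵥ u)) := by
  ext x y
  simp only [Matrix.mul_apply, Matrix.vecMulVec_apply, Matrix.mulVec,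
    dotProduct, Matrix.conjTranspose_apply, Pi.star_apply, star_sum, star_mul',
    star_star, Finset.sum_mul, Finset.mul_sum]
  apply Finset.sum_congr rfl; intro i _
  apply Finset.sum_congr rfl; intro j _
  ring

lemma psd_sum {n ι : Type*} [Fintype n] [Fintype ι] (g : ι → Matrix n n ℂ)
    (h : ∀ i, (g i).PosSemidef) : (∑ i, g i).PosSemidef :=
  Finset.sum_induction g _ (fun _ _ ha hb => ha.add hb) Matrix.PosSemidef.zero
    (fun i _ => h i)

lemma psd_smul {n : Type*} [Fintype n] {r : ℝ} (hr : 0 ≤ r) {S : Matrix n n ℂ}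
    (hS : S.PosSemidef) : ((r : ℂ) • S).PosSemidef := by
  rw [Matrix.posSemidef_iff_dotProduct_mulVec]
  constructor
  · have := hS.isHermitian
    unfold Matrix.IsHermitian at *
    rw [Matrix.conjTranspose_smul, this]
    simp
  · intro x
    have : star x ⬝ᵥ ((r : ℂ) • S) *ᵥ x = (r : ℂ) * (star x ⬝ᵥ S *ᵥ x) := by
      simp [Matrix.smul_mulVec, dotProduct_smul]
    rw [this]
    exact mul_nonneg (by simpa using Complex.zero_le_real.mpr hr) (hS.dotProduct_mulVec_nonneg x)

lemma card_lt_filter {d M : ℕ} (hMd : M ≤ d) :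
    (Finset.univ.filter fun i : Fin d => i.val < M).card = M := by
  have : (Finset.univ.filter fun i : Fin d => i.val < M)
      = (Finset.univ : Finset (Fin M)).map (Fin.castLEEmb hMd) := by
    ext i
    simp only [Finset.mem_filter, Finset.mem_univ, true_and, Finset.mem_map,
      Fin.castLEEmb_apply]
    constructor
    · rintro h; exact ⟨⟨i.val, h⟩, by simp [Fin.ext_iff, Fin.castLE]⟩
    · rintro ⟨j, rfl⟩; simpa using j.isLt
  rw [this, Finset.card_map, Finset.card_univ, Fintype.card_fin]

noncomputable def Emat (d M : ℕ) : Matrix (Fin d) (Fin d) ℂ :=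
  Matrix.of fun i j =>
    if i.val < M ∧ j.val < M then (if i = j then (1 : ℂ) else 0) - 1 / M else 0

noncomputable def Fmat (d M : ℕ) : Matrix (Fin d) (Fin d) ℂ :=
  Matrix.diagonal fun i => if M ≤ i.val then 1 - (1 : ℂ) / M else 0

lemma one_sub_B (d M : ℕ) (hM : 0 < M) :
    (1 : Matrix (Fin d) (Fin d) ℂ) - (PsiM d M + PiGtM d M) = Emat d M + Fmat d M := by
  ext i j
  simp only [Matrix.sub_apply, Matrix.add_apply, Matrix.one_apply, PsiM, PiGtM, Emat, Fmat,
    Matrix.of_apply, Matrix.diagonal_apply]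
  by_cases hij : i = j
  · subst hij
    by_cases h : i.val < M <;> simp [h, Nat.not_lt.mp, Nat.not_le.mpr] <;> omega
  · have : i.val = j.val → False := fun h => hij (Fin.ext h)
    split_ifs <;> simp_all <;> ring

lemma Emat_herm (d M : ℕ) : (Emat d M)ᴴ = Emat d M := by
  ext i j
  simp only [Matrix.conjTranspose_apply, Emat, Matrix.of_apply, Complex.star_def,
    apply_ite (starRingEnd ℂ), map_sub, _root_.map_one, _root_.map_zero, map_div₀, map_natCast]
  by_cases h : i = j
  · subst h; simp
  · have h' : ¬ j = i := fun e => h e.symm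
    simp [h, h', and_comm]

lemma Emat_idem (d M : ℕ) (hM : 0 < M) (hMd : M ≤ d) :
    Emat d M * Emat d M = Emat d M := by
  have hMne : (M : ℂ) ≠ 0 := Nat.cast_ne_zero.mpr hM.ne'
  ext i j
  rw [Matrix.mul_apply]
  by_cases hi : i.val < M
  · by_cases hj : j.val < M
    · have step : ∀ k : Fin d, Emat d M i k * Emat d M k j
          = (if k.val < M then
              ((if k = i then (1:ℂ) else 0) * (if k = j then 1 else 0)
               - (if k = i then 1 else 0) * (1/M) - (1/M) * (if k = j then 1 else 0)
               + (1/M) * (1/M)) else 0) := by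
        intro k
        simp only [Emat, Matrix.of_apply]
        by_cases hk : k.val < M
        · simp only [hi, hj, hk, and_true, true_and, if_true, eq_comm (a := i)]
          split_ifs <;> ring
        · simp [hk]
      rw [Finset.sum_congr rfl (fun k _ => step k), ← Finset.sum_filter]
      simp only [ite_mul, mul_ite, one_mul, mul_one, zero_mul, mul_zero]
      have hiS : i ∈ Finset.univ.filter fun k : Fin d => k.val < M := by simp [hi]
      have hjS : j ∈ Finset.univ.filter fun k : Fin d => k.val < M := by simp [hj]
      rw [Finset.sum_add_distrib, Finset.sum_sub_distrib, Finset.sum_sub_distrib,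
        Finset.sum_ite_eq' _ j, Finset.sum_ite_eq' _ i, Finset.sum_ite_eq' _ j,
        Finset.sum_const, card_lt_filter hMd, if_pos hiS, if_pos hjS, if_pos hjS]
      have hfs : (M : ℕ) • ((1:ℂ)/M * (1/M)) = 1/M := by
        rw [nsmul_eq_mul]; field_simp
      rw [hfs]
      have hsym : (if j = i then (1:ℂ) else 0) = (if i = j then 1 else 0) := by
        simp [eq_comm]
      rw [hsym]
      simp only [Emat, Matrix.of_apply, hi, hj, and_self, if_true, true_and]
      ring
    · have hz : ∀ k : Fin d, Emat d M i k * Emat d M k j = 0 := by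
        intro k; simp [Emat, hj]
      rw [Finset.sum_congr rfl (fun k _ => hz k), Finset.sum_const_zero]
      simp [Emat, hj]
  · have hz : ∀ k : Fin d, Emat d M i k * Emat d M k j = 0 := by
      intro k; simp [Emat, hi]
    rw [Finset.sum_congr rfl (fun k _ => hz k), Finset.sum_const_zero]
    simp [Emat, hi]

noncomputable def wvec (d M : ℕ) : Fin d → Fin d → ℂ := fun j x =>
  if j.val < M then (if j.val = 0 ∧ x.val < M then 1 else 0) else (if x = j then 1 else 0)

lemma B_decomp (d M : ℕ) (hM : 0 < M) (hd : 0 < d) :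
    PsiM d M + PiGtM d M
      = ((1:ℂ)/M) • ∑ j : Fin d, Matrix.vecMulVec (wvec d M j) (star (wvec d M j)) := by
  ext i k
  have hterm : ∀ j : Fin d, wvec d M j i * star (wvec d M j k)
      = (if j = (⟨0, hd⟩ : Fin d) then
          (if i.val < M then (1:ℂ) else 0) * (if k.val < M then 1 else 0) else 0)
        + (if j = i then (if i = k ∧ M ≤ i.val then (1:ℂ) else 0) else 0) := by
    intro j
    simp only [wvec, Complex.star_def, apply_ite (starRingEnd ℂ), _root_.map_one,
      _root_.map_zero, Fin.ext_iff]
    split_ifs <;> first | ring1 | omega | (exfalso; omega)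
  rw [Matrix.smul_apply, Matrix.sum_apply]
  simp only [Matrix.vecMulVec_apply, Pi.star_apply]
  rw [Finset.sum_congr rfl (fun j _ => hterm j), Finset.sum_add_distrib,
    Finset.sum_ite_eq' Finset.univ (⟨0, hd⟩ : Fin d),
    Finset.sum_ite_eq' Finset.univ i]
  simp only [Finset.mem_univ, if_true, smul_eq_mul]
  simp only [PsiM, PiGtM, Matrix.add_apply, Matrix.of_apply, Fin.ext_iff]
  split_ifs <;> first | ring1 | omega | (exfalso; omega)

lemma sioKraus_conj_mulVec {d : ℕ} (f : Equiv.Perm (Fin d)) (c : Fin d → ℂ)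
    (u : Fin d → ℂ) (x : Fin d) :
    ((sioKraus f c)ᴴ *ᵥ u) x = star (c x) * u (f x) := by
  simp [Matrix.mulVec, dotProduct, sioKraus, Matrix.conjTranspose_apply,
    apply_ite (starRingEnd ℂ), ite_mul, Finset.sum_ite_eq', mul_comm]

lemma KK_diag {d : ℕ} (f : Equiv.Perm (Fin d)) (c : Fin d → ℂ) (y : Fin d) :
    ((sioKraus f c)ᴴ * sioKraus f c) y y = star (c y) * c y := by
  simp [Matrix.mul_apply, sioKraus, Matrix.conjTranspose_apply,
    apply_ite (starRingEnd ℂ), ite_mul, mul_ite, Finset.sum_ite_eq']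

lemma Bdiag {d M : ℕ} (i : Fin d) :
    (PsiM d M + PiGtM d M) i i = (1 : ℂ) / M := by
  simp only [Matrix.add_apply, PsiM, PiGtM, Matrix.of_apply]
  by_cases h : i.val < M
  · simp [h, Nat.not_le.mpr h]
  · simp [h, Nat.not_lt.mp h]

theorem stmt_8 (d M : ℕ) (hM : 0 < M) (hMd : M ≤ d)
    (ι : Type) [Fintype ι] (f : ι → Equiv.Perm (Fin d)) (c : ι → Fin d → ℂ)
    (hTP : ∑ α : ι, (sioKraus (f α) (c α))ᴴ * sioKraus (f α) (c α) = 1)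
    (A : Matrix (Fin d) (Fin d) ℂ)
    (hA : A = ∑ α : ι,
      (sioKraus (f α) (c α))ᴴ * (PsiM d M + PiGtM d M) * sioKraus (f α) (c α)) :
    (A.PosSemidef ∧ ((1 : Matrix (Fin d) (Fin d) ℂ) - A).PosSemidef)
    ∧ (∀ y : Fin d, A y y = (1 : ℂ) / M)
    ∧ (∃ (m : ℕ) (φ : Fin m → Fin d → ℂ),
        A = ((1 : ℂ) / M) • ∑ j : Fin m, Matrix.vecMulVec (φ j) (star (φ j))
        ∧ ∀ j : Fin m, (Finset.univ.filter fun x => φ j x ≠ 0).card ≤ M) := by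
  have hd : 0 < d := lt_of_lt_of_le hM hMd
  have hMne : (M : ℂ) ≠ 0 := Nat.cast_ne_zero.mpr hM.ne'
  -- trace preservation on the diagonal
  have hTPdiag : ∀ y : Fin d, ∑ α : ι, star (c α y) * c α y = 1 := by
    intro y
    have h := congrArg (fun m : Matrix (Fin d) (Fin d) ℂ => m y y) hTP
    simpa [Matrix.sum_apply, KK_diag, Matrix.one_apply] using h
  -- (ii) diagonal entries
  have hDiag : ∀ y : Fin d, A y y = (1 : ℂ) / M := by
    intro y
    rw [hA, Matrix.sum_apply]
    have h : ∀ α : ι, ((sioKraus (f α) (c α))ᴴ * (PsiM d M + PiGtM d M)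
        * sioKraus (f α) (c α)) y y = (1 / M) * (star (c α y) * c α y) := by
      intro α; rw [sandwich_apply, Bdiag]; ring
    rw [Finset.sum_congr rfl fun α _ => h α, ← Finset.mul_sum, hTPdiag y, mul_one]
  -- decomposition of A over ι × Fin d
  have hAdec : A = ((1:ℂ)/M) • ∑ α : ι, ∑ j : Fin d,
      Matrix.vecMulVec ((sioKraus (f α) (c α))ᴴ *ᵥ wvec d M j)
        (star ((sioKraus (f α) (c α))ᴴ *ᵥ wvec d M j)) := by
    rw [hA, Finset.smul_sum]
    apply Finset.sum_congr rfl; intro α _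
    rw [B_decomp d M hM hd, Matrix.mul_smul, Matrix.smul_mul, Matrix.mul_sum,
      Matrix.sum_mul]
    congr 1
    exact Finset.sum_congr rfl fun j _ => sandwich_vecMulVec _ _
  -- A is PSD
  have hreal : ((1:ℂ)/M) = (((1 / M : ℝ)) : ℂ) := by push_cast; ring
  have hApsd : A.PosSemidef := by
    rw [hAdec, hreal]
    exact psd_smul (by positivity)
      (psd_sum _ fun α => psd_sum _ fun j => psd_vecMulVec _)
  -- 1 - A is PSD
  have h1Bpsd : ((1 : Matrix (Fin d) (Fin d) ℂ) - (PsiM d M + PiGtM d M)).PosSemidef := by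
    rw [one_sub_B d M hM]
    have hE : (Emat d M).PosSemidef := by
      have h := Matrix.posSemidef_conjTranspose_mul_self (Emat d M)
      rwa [Emat_herm, Emat_idem d M hM hMd] at h
    have hF : (Fmat d M).PosSemidef := by
      refine Matrix.posSemidef_diagonal_iff.mpr fun i => ?_
      split_ifs
      · have h1 : (1 - 1/M : ℂ) = ((1 - 1/M : ℝ) : ℂ) := by push_cast; ring
        rw [h1]
        refine Complex.zero_le_real.mpr ?_
        rw [sub_nonneg]
        exact div_le_one_of_le₀ (by exact_mod_cast hM) (by positivity)
      · exact le_refl 0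
    exact hE.add hF
  have h1Apsd : ((1 : Matrix (Fin d) (Fin d) ℂ) - A).PosSemidef := by
    have hsplit : (1 : Matrix (Fin d) (Fin d) ℂ) - A
        = ∑ α : ι, (sioKraus (f α) (c α))ᴴ
            * ((1 : Matrix (Fin d) (Fin d) ℂ) - (PsiM d M + PiGtM d M))
            * sioKraus (f α) (c α) := by
      symm
      calc ∑ α : ι, (sioKraus (f α) (c α))ᴴ
            * ((1 : Matrix (Fin d) (Fin d) ℂ) - (PsiM d M + PiGtM d M))
            * sioKraus (f α) (c α)
          = (∑ α : ι, (sioKraus (f α) (c α))ᴴ * sioKraus (f α) (c α))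
            - ∑ α : ι, (sioKraus (f α) (c α))ᴴ * (PsiM d M + PiGtM d M)
              * sioKraus (f α) (c α) := by
            rw [← Finset.sum_sub_distrib]
            exact Finset.sum_congr rfl fun α _ => by
              rw [Matrix.mul_sub, Matrix.sub_mul, Matrix.mul_one]
        _ = 1 - A := by rw [hTP, hA]
    rw [hsplit]
    exact psd_sum _ fun α => h1Bpsd.conjTranspose_mul_mul_same _
  refine ⟨⟨hApsd, h1Apsd⟩, hDiag, ?_⟩
  -- (iii) explicit decomposition
  set e := (Fintype.equivFin (ι × Fin d)).symm with he
  refine ⟨Fintype.card (ι × Fin d),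
    fun j => (sioKraus (f (e j).1) (c (e j).1))ᴴ *ᵥ wvec d M (e j).2, ?_, ?_⟩
  · rw [hAdec]
    congr 1
    rw [← Fintype.sum_prod_type']
    exact (Equiv.sum_comp e fun p : ι × Fin d =>
      Matrix.vecMulVec ((sioKraus (f p.1) (c p.1))ᴴ *ᵥ wvec d M p.2)
        (star ((sioKraus (f p.1) (c p.1))ᴴ *ᵥ wvec d M p.2))).symm
  · intro j
    set α := (e j).1
    set j2 := (e j).2
    by_cases hj2 : j2.val < M
    · -- support contained in the preimage of {0,…,M-1} under f α
      have hsub : (Finset.univ.filter fun x : Fin d =>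
            ((sioKraus (f α) (c α))ᴴ *ᵥ wvec d M j2) x ≠ 0)
          ⊆ Finset.univ.filter fun x : Fin d => ((f α) x).val < M := by
        intro x hx
        simp only [Finset.mem_filter, Finset.mem_univ, true_and] at hx ⊢
        rw [sioKraus_conj_mulVec] at hx
        by_contra h
        apply hx
        simp [wvec, hj2, h]
      have hcard : (Finset.univ.filter fun x : Fin d => ((f α) x).val < M).card = M := by
        have himg : (Finset.univ.filter fun x : Fin d => ((f α) x).val < M)
            = (Finset.univ.filter fun i : Fin d => i.val < M).map
                (f α).symm.toEmbedding := by
          ext x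
          simp only [Finset.mem_filter, Finset.mem_univ, true_and, Finset.mem_map,
            Equiv.coe_toEmbedding]
          constructor
          · intro h; exact ⟨(f α) x, h, by simp⟩
          · rintro ⟨i, hi, rfl⟩; simpa using hi
        rw [himg, Finset.card_map, card_lt_filter hMd]
      calc (Finset.univ.filter fun x : Fin d =>
            ((sioKraus (f α) (c α))ᴴ *ᵥ wvec d M j2) x ≠ 0).card
          ≤ _ := Finset.card_le_card hsub
        _ = M := hcard
    · -- support contained in a single point
      have hsub : (Finset.univ.filter fun x : Fin d =>
            ((sioKraus (f α) (c α))ᴴ *ᵥ wvec d M j2) x ≠ 0)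
          ⊆ {(f α).symm j2} := by
        intro x hx
        simp only [Finset.mem_filter, Finset.mem_univ, true_and] at hx
        rw [sioKraus_conj_mulVec] at hx
        simp only [Finset.mem_singleton]
        by_contra h
        apply hx
        have hne : ¬ (f α) x = j2 := by
          intro he'; exact h (by rw [← he']; simp)
        simp [wvec, hj2, hne]
      calc (Finset.univ.filter fun x : Fin d =>
            ((sioKraus (f α) (c α))ᴴ *ᵥ wvec d M j2) x ≠ 0).card
          ≤ ({(f α).symm j2} : Finset (Fin d)).card := Finset.card_le_card hsub
        _ = 1 := Finset.card_singleton _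
        _ ≤ M := hM
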